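/- For distinct (mod π) reals b_1,…,b_m and any reals a_1,…,a_m, the sum over t=1..m of [∏_{j=1}^m sin(a_j - b_t)] / [∏_{j≠t} sin(b_j - b_t)] equals sin(a_1+⋯+a_m − b_1−⋯−b_m). -/

import Mathlib

open Finset

open Polynomial Complex in
/-- Divided-difference identity: the sum of `Q(v i)` times nodal weights equals the
top coefficient of `Q`. -/
private lemma hermite_divdiff {F : Type*} [Field F] {ι : Type*} [DecidableEq ι] (s : Finset ι)
    (v : ι → F) (hvs : Set.InjOn v s) (Q : F[X]) (hQ : Q.degree < s.card) :
    ∑ i ∈ s, Q.eval (v i) * Lagrange.nodalWeight s v i = Q.coeff (s.card - 1) := by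
  have hQ' := Lagrange.eq_interpolate hvs hQ
  conv_rhs => rw [hQ', Lagrange.interpolate_apply]
  rw [finset_sum_coeff]
  refine sum_congr rfl fun i hi => ?_
  rw [coeff_C_mul]
  congr 1
  have hbasis : Lagrange.basis s v i =
      C (Lagrange.nodalWeight s v i) * Lagrange.nodal (s.erase i) v := by
    rw [Lagrange.basis_eq_prod_sub_inv_mul_nodal_div hi, Lagrange.nodal_erase_eq_nodal_div hi]
  rw [hbasis, coeff_C_mul]
  have hdeg : (Lagrange.nodal (s.erase i) v).natDegree = s.card - 1 := by
    rw [Lagrange.natDegree_nodal, card_erase_of_mem hi]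
  rw [← hdeg, (Lagrange.nodal_monic).coeff_natDegree, mul_one]

open Polynomial Complex in
private lemma hermite_key {m : ℕ} (x w : Fin m → ℂ) (hinj : Function.Injective x)
    (h0 : ∀ t, x t ≠ 0) :
    ∑ t, (∏ j, (w j - x t)) / (x t * ∏ j ∈ univ.erase t, (x j - x t))
      = (∏ j, w j) / (∏ j, x j) - 1 := by
  classical
  set v : Option (Fin m) → ℂ := fun o => o.elim 0 x with hv
  have hvinj : Function.Injective v := by
    intro o₁ o₂ h
    match o₁, o₂ with
    | none, none => rfl
    | none, some t => exact absurd h.symm (h0 t)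
    | some t, none => exact absurd h (h0 t)
    | some s, some t => exact congrArg some (hinj h)
  set Q : ℂ[X] := Lagrange.nodal univ w with hQdef
  have hcard : (univ : Finset (Option (Fin m))).card = m + 1 := by
    simp [Fintype.card_option]
  have hQdeg : Q.degree < (univ : Finset (Option (Fin m))).card := by
    rw [hcard, hQdef, Lagrange.degree_nodal, card_univ, Fintype.card_fin]
    exact_mod_cast Nat.lt_succ_self m
  have hdd := hermite_divdiff (univ : Finset (Option (Fin m))) v (hvinj.injOn) Q hQdeg
  rw [hcard, Nat.add_sub_cancel] at hdd
  have hcoeff : Q.coeff m = 1 := by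
    have : Q.natDegree = m := by simp [hQdef, Lagrange.natDegree_nodal]
    rw [← this, (Lagrange.nodal_monic).coeff_natDegree]
  rw [hcoeff, Fintype.sum_option] at hdd
  have hsome_inj : ∀ (a : Fin m), a ∈ univ → ∀ (b : Fin m), b ∈ univ →
      (some a : Option (Fin m)) = some b → a = b :=
    fun a _ b _ h => Option.some_injective _ h
  have herase : (univ : Finset (Option (Fin m))).erase none = univ.image some := by
    ext o; cases o <;> simp
  have hnone : Q.eval (v none) * Lagrange.nodalWeight univ v none
      = (∏ j, w j) / (∏ j, x j) := by
    have hev : Q.eval (v none) = ∏ j, (0 - w j) := by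
      simp [hQdef, Lagrange.eval_nodal, hv]
    have hnw : Lagrange.nodalWeight univ v none = ∏ j, (0 - x j)⁻¹ := by
      rw [Lagrange.nodalWeight, herase, prod_image hsome_inj]
      simp [hv]
    rw [hev, hnw, div_eq_mul_inv, ← prod_inv_distrib, ← prod_mul_distrib, ← prod_mul_distrib]
    exact prod_congr rfl fun j _ => by simp [zero_sub, inv_neg]
  have hsome : ∀ t : Fin m,
      Q.eval (v (some t)) * Lagrange.nodalWeight univ v (some t)
        = -((∏ j, (w j - x t)) / (x t * ∏ j ∈ univ.erase t, (x j - x t))) := by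
    intro t
    have hB : ∏ j ∈ univ.erase t, (x t - x j) ≠ 0 := by
      rw [prod_ne_zero_iff]
      intro j hj
      exact sub_ne_zero_of_ne fun h => (mem_erase.mp hj).1 (hinj h.symm)
    have heraset : (univ : Finset (Option (Fin m))).erase (some t)
        = insert none ((univ.erase t).image some) := by
      ext o
      cases o with
      | none => simp
      | some j => simp [eq_comm]
    have hnw : Lagrange.nodalWeight univ v (some t)
        = (x t)⁻¹ * ∏ j ∈ univ.erase t, (x t - x j)⁻¹ := by
      rw [Lagrange.nodalWeight, heraset, prod_insert (by simp),
        prod_image (fun a _ b _ h => Option.some_injective _ h)]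
      simp [hv]
    have hev : Q.eval (v (some t)) = ∏ j, (x t - w j) := by
      simp [hQdef, Lagrange.eval_nodal, hv]
    have hpos : 0 < m := t.pos
    have hcarderase : (univ.erase t).card = m - 1 := by
      rw [card_erase_of_mem (mem_univ t), card_univ, Fintype.card_fin]
    have hc1 : (-1 : ℂ) ^ m = ∏ _j : Fin m, (-1 : ℂ) := by simp
    have hc2 : (-1 : ℂ) ^ (m - 1) = ∏ _j ∈ univ.erase t, (-1 : ℂ) := by
      rw [prod_const, hcarderase]
    have hnum : ∏ j, (w j - x t) = (-1 : ℂ) ^ m * ∏ j, (x t - w j) := by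
      rw [hc1, ← prod_mul_distrib]
      exact prod_congr rfl fun j _ => by ring
    have hden : ∏ j ∈ univ.erase t, (x j - x t)
        = (-1 : ℂ) ^ (m - 1) * ∏ j ∈ univ.erase t, (x t - x j) := by
      rw [hc2, ← prod_mul_distrib]
      exact prod_congr rfl fun j _ => by ring
    have hm1 : (-1 : ℂ) ^ m = -(-1 : ℂ) ^ (m - 1) := by
      conv_lhs => rw [← Nat.succ_pred_eq_of_pos hpos]
      rw [pow_succ, Nat.pred_eq_sub_one]
      ring
    have hpow : ((-1 : ℂ) ^ (m - 1)) ≠ 0 := by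
      exact pow_ne_zero _ (by norm_num)
    rw [hnw, hev, hnum, hden, hm1, prod_inv_distrib]
    field_simp
  rw [hnone] at hdd
  have hsum : ∑ i : Fin m, Q.eval (v (some i)) * Lagrange.nodalWeight univ v (some i)
      = -∑ t, (∏ j, (w j - x t)) / (x t * ∏ j ∈ univ.erase t, (x j - x t)) := by
    rw [← sum_neg_distrib]
    exact sum_congr rfl fun t _ => hsome t
  rw [hsum] at hdd
  linear_combination -hdd

open Complex in
private lemma hermite_key2 {m : ℕ} (u v : Fin m → ℂ) (hu : ∀ j, u j ≠ 0) (hv : ∀ j, v j ≠ 0)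
    (hinj : Function.Injective (fun j => v j ^ 2)) :
    ∑ t, (∏ j, ((u j ^ 2 - v t ^ 2) / (u j * (2 * I * v t)))) /
        (∏ j ∈ univ.erase t, ((v j ^ 2 - v t ^ 2) / (v j * (2 * I * v t))))
      = ((∏ j, u j) ^ 2 - (∏ j, v j) ^ 2) / ((∏ j, u j) * (2 * I * (∏ j, v j))) := by
  have hU : (∏ j, u j) ≠ 0 := prod_ne_zero_iff.mpr fun j _ => hu j
  have hV : (∏ j, v j) ≠ 0 := prod_ne_zero_iff.mpr fun j _ => hv j
  have hI : (2 * I : ℂ) ≠ 0 := by simp [Complex.I_ne_zero]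
  have hstep : ∀ t, (∏ j, ((u j ^ 2 - v t ^ 2) / (u j * (2 * I * v t)))) /
        (∏ j ∈ univ.erase t, ((v j ^ 2 - v t ^ 2) / (v j * (2 * I * v t))))
      = (∏ j, v j) / (2 * I * (∏ j, u j)) *
          ((∏ j, (u j ^ 2 - v t ^ 2)) / (v t ^ 2 * ∏ j ∈ univ.erase t, (v j ^ 2 - v t ^ 2))) := by
    intro t
    have hM : (∏ j ∈ univ.erase t, (v j ^ 2 - v t ^ 2)) ≠ 0 := by
      rw [prod_ne_zero_iff]
      intro j hj
      exact sub_ne_zero_of_ne fun h => (mem_erase.mp hj).1 (hinj h)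
    have hD1 : (∏ j, (u j * (2 * I * v t))) ≠ 0 :=
      prod_ne_zero_iff.mpr fun j _ => mul_ne_zero (hu j) (mul_ne_zero hI (hv t))
    have hD2 : (∏ j ∈ univ.erase t, (v j * (2 * I * v t))) ≠ 0 :=
      prod_ne_zero_iff.mpr fun j _ => mul_ne_zero (hv j) (mul_ne_zero hI (hv t))
    have hd1 : (∏ j, (u j * (2 * I * v t))) = (∏ j, u j) * (2 * I * v t) ^ m := by
      rw [prod_mul_distrib, prod_const, card_univ, Fintype.card_fin]
    have hd2' : (∏ j, (v j * (2 * I * v t))) = (∏ j, v j) * (2 * I * v t) ^ m := by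
      rw [prod_mul_distrib, prod_const, card_univ, Fintype.card_fin]
    have hd2 : (∏ j, (v j * (2 * I * v t)))
        = (v t * (2 * I * v t)) * ∏ j ∈ univ.erase t, (v j * (2 * I * v t)) :=
      (mul_prod_erase univ _ (mem_univ t)).symm
    have hkey : 2 * I * (∏ j, u j) * (v t ^ 2 * ∏ j ∈ univ.erase t, (v j * (2 * I * v t)))
        = (∏ j, v j) * (∏ j, (u j * (2 * I * v t))) := by
      have h3 : v t * (2 * I * v t) * ∏ j ∈ univ.erase t, (v j * (2 * I * v t))
          = (∏ j, v j) * (2 * I * v t) ^ m := hd2.symm.trans hd2'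
      rw [hd1]
      linear_combination (∏ j, u j) * h3
    rw [prod_div_distrib, prod_div_distrib]
    rw [div_div_div_comm]
    have hq : (∏ j, (u j * (2 * I * v t))) / (∏ j ∈ univ.erase t, (v j * (2 * I * v t)))
        = (2 * I * (∏ j, u j) * v t ^ 2) / (∏ j, v j) := by
      rw [div_eq_div_iff hD2 hV]
      linear_combination -hkey
    rw [hq]
    field_simp
  rw [sum_congr rfl fun t _ => hstep t, ← mul_sum]
  have hx0 : ∀ t, v t ^ 2 ≠ 0 := fun t => pow_ne_zero _ (hv t)
  rw [hermite_key (fun j => v j ^ 2) (fun j => u j ^ 2) hinj hx0]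
  rw [prod_pow, prod_pow]
  field_simp

open Complex in
private lemma hermite_hsin (p q : ℝ) :
    ((Real.sin (p - q) : ℝ) : ℂ)
      = (Complex.exp (p * I) ^ 2 - Complex.exp (q * I) ^ 2)
        / (Complex.exp (p * I) * (2 * I * Complex.exp (q * I))) := by
  rw [Complex.ofReal_sin]
  rw [Complex.sin]
  push_cast
  rw [show (-((p : ℂ) - q) * I) = q * I - p * I by ring,
    show (((p : ℂ) - q) * I) = p * I - q * I by ring,
    Complex.exp_sub, Complex.exp_sub]
  have h1 := Complex.exp_ne_zero ((p : ℂ) * I)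
  have h2 := Complex.exp_ne_zero ((q : ℂ) * I)
  have hI : (I : ℂ) ≠ 0 := Complex.I_ne_zero
  field_simp
  ring_nf
  rw [Complex.I_sq]
  ring

theorem hermite_sine_identity (m : ℕ) (a b : Fin m → ℝ)
    (hb : ∀ j t, j ≠ t → Real.sin (b j - b t) ≠ 0) :
    ∑ t, (∏ j, Real.sin (a j - b t)) / (∏ j ∈ univ.erase t, Real.sin (b j - b t))
      = Real.sin (∑ j, a j - ∑ j, b j) := by
  open Complex in
  have hinj : Function.Injective (fun j => Complex.exp ((b j : ℝ) * I) ^ 2) := by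
    intro s t h
    simp only at h
    by_contra hne
    apply hb s t hne
    have h0 : ((Real.sin (b s - b t) : ℝ) : ℂ) = 0 := by
      rw [hermite_hsin, h]
      simp
    exact_mod_cast h0
  rw [← Complex.ofReal_inj]
  simp only [Complex.ofReal_sum, Complex.ofReal_div, Complex.ofReal_prod, hermite_hsin]
  have hE : Complex.exp ((∑ j, ((a j : ℝ) : ℂ)) * Complex.I)
      = ∏ j, Complex.exp (((a j : ℝ) : ℂ) * Complex.I) := by
    rw [Finset.sum_mul, Complex.exp_sum]
  have hF : Complex.exp ((∑ j, ((b j : ℝ) : ℂ)) * Complex.I)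
      = ∏ j, Complex.exp (((b j : ℝ) : ℂ) * Complex.I) := by
    rw [Finset.sum_mul, Complex.exp_sum]
  rw [hE, hF]
  exact hermite_key2 (fun j => Complex.exp ((a j : ℝ) * Complex.I))
    (fun j => Complex.exp ((b j : ℝ) * Complex.I))
    (fun j => Complex.exp_ne_zero _) (fun j => Complex.exp_ne_zero _) hinj
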